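/- Let R = k[[x,y,z]]/(xy), let p ≥ 1, let h be a unit of R, and consider the 4×4 matrix D = (y, -z^p, 0, h; 0, x, 0, 0; 0, 0, y, -z; 0, 0, 0, x) over R. Then the cokernel of D (as a map R^4 → R^4) is isomorphic to I_(p+1) ⊕ R, where I_(p+1) = (x, z^(p+1))R. -/

import Mathlib

open CategoryTheory MvPowerSeries

universe u

/-- The two-dimensional `A_∞` hypersurface singularity `k[[x,y,z]]/(xy)`. -/
abbrev AInf (k : Type u) [Field k] : Type u :=
  MvPowerSeries (Fin 3) k ⧸
    Ideal.span {(X 0 : MvPowerSeries (Fin 3) k) * (X 1 : MvPowerSeries (Fin 3) k)}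

/-- The projection `k[[x,y,z]] → k[[x,y,z]]/(xy)`. -/
noncomputable abbrev aInfMk (k : Type u) [Field k] :
    MvPowerSeries (Fin 3) k →+* AInf k :=
  Ideal.Quotient.mk _

/-- The images of `x`, `y`, `z` in `R = k[[x,y,z]]/(xy)`. -/
noncomputable abbrev xA (k : Type u) [Field k] : AInf k := aInfMk k (X 0)
noncomputable abbrev yA (k : Type u) [Field k] : AInf k := aInfMk k (X 1)
noncomputable abbrev zA (k : Type u) [Field k] : AInf k := aInfMk k (X 2)

/-- The ideal `I_l = (x, z^l)R` for `l ≥ 1`. -/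
noncomputable abbrev IIdeal (k : Type u) [Field k] (l : ℕ) : Ideal (AInf k) :=
  Ideal.span {xA k, zA k ^ l}

/-- The ideal `J_l = (y, z^l)R` for `l ≥ 1`. -/
noncomputable abbrev JIdeal (k : Type u) [Field k] (l : ℕ) : Ideal (AInf k) :=
  Ideal.span {yA k, zA k ^ l}

/-- The module `I_l`, with the convention `I_0 = R`. -/
noncomputable def IMod (k : Type u) [Field k] (l : ℕ) : ModuleCat.{u} (AInf k) :=
  if l = 0 then ModuleCat.of (AInf k) (AInf k) else ModuleCat.of (AInf k) (IIdeal k l)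

lemma aInf_nontrivial (k : Type u) [Field k] : Nontrivial (AInf k) := by
  apply Ideal.Quotient.nontrivial_iff.mpr
  rw [Ne, Ideal.span_singleton_eq_top, MvPowerSeries.isUnit_iff_constantCoeff]
  simp

lemma aInf_xy_zero (k : Type u) [Field k] : xA k * yA k = 0 := by
  rw [← map_mul, Ideal.Quotient.eq_zero_iff_mem]
  exact Ideal.subset_span rfl

lemma aInf_key (k : Type u) [Field k] (l : ℕ) (a b : AInf k)
    (hab : a * xA k + b * zA k ^ l = 0) :
    ∃ c d : AInf k, a = c * yA k + d * zA k ^ l ∧ b = -(d * xA k) := by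
  obtain ⟨A, rfl⟩ := Ideal.Quotient.mk_surjective a
  obtain ⟨B, rfl⟩ := Ideal.Quotient.mk_surjective b
  have hab' : (Ideal.Quotient.mk _ (A * X 0 + B * X 2 ^ l) : AInf k) = 0 := by
    push_cast [map_add, map_mul, map_pow]
    exact hab
  rw [Ideal.Quotient.eq_zero_iff_mem, Ideal.mem_span_singleton] at hab'
  obtain ⟨C, hC⟩ := hab'
  have hdvd : (X 2 : MvPowerSeries (Fin 3) k) ^ l ∣ (A - X 1 * C) := by
    have hX0 : (X 0 : MvPowerSeries (Fin 3) k) * (A - X 1 * C) = X 2 ^ l * (-B) := by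
      linear_combination hC
    rw [X_pow_dvd_iff]
    intro m hm
    have h1 : coeff (Finsupp.single 0 1 + m)
        ((X 0 : MvPowerSeries (Fin 3) k) * (A - X 1 * C)) = coeff m (A - X 1 * C) := by
      rw [show (X 0 : MvPowerSeries (Fin 3) k) = monomial (Finsupp.single 0 1) 1 from rfl,
        coeff_add_monomial_mul, one_mul]
    have h2 : coeff (Finsupp.single 0 1 + m)
        ((X 2 : MvPowerSeries (Fin 3) k) ^ l * (-B)) = 0 := by
      have := (X_pow_dvd_iff (s := (2 : Fin 3)) (n := l)
        (φ := (X 2 : MvPowerSeries (Fin 3) k) ^ l * (-B))).mp ⟨-B, rfl⟩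
      apply this
      simpa using hm
    rw [← h1, hX0, h2]
  obtain ⟨D, hD⟩ := hdvd
  have hB : B = -(X 0 * D) := by
    have hX0 : (X 0 : MvPowerSeries (Fin 3) k) * (A - X 1 * C) = X 2 ^ l * (-B) := by
      linear_combination hC
    rw [hD] at hX0
    have hz : (X 2 : MvPowerSeries (Fin 3) k) ^ l ≠ 0 := by
      apply pow_ne_zero
      intro hzz
      have := congrArg (coeff (Finsupp.single (2 : Fin 3) 1)) hzz
      rw [coeff_X] at this
      simp at this
    have : (X 2 : MvPowerSeries (Fin 3) k) ^ l * (X 0 * D + B) = 0 := by linear_combination hX0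
    rcases mul_eq_zero.mp this with h | h
    · exact absurd h hz
    · linear_combination h
  refine ⟨aInfMk k C, aInfMk k D, ?_, ?_⟩
  · have : A = C * X 1 + D * X 2 ^ l := by linear_combination hD
    rw [this]; push_cast [map_add, map_mul, map_pow]; ring
  · rw [hB]; push_cast [map_neg, map_mul]; ring

set_option maxHeartbeats 2000000

theorem aInf_cokernel_iso (k : Type u) [Field k] (p : ℕ) (hp : 1 ≤ p)
    (h : AInf k) (hh : IsUnit h) :
    Nonempty (((Fin 4 → AInf k) ⧸
        LinearMap.range (Matrix.toLin'
          (!![yA k, -(zA k ^ p), 0, h;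
              0, xA k, 0, 0;
              0, 0, yA k, -(zA k);
              0, 0, 0, xA k]))) ≃ₗ[AInf k]
      (IIdeal k (p + 1) × AInf k)) := by
  classical
  haveI : Nontrivial (AInf k) := aInf_nontrivial k
  obtain ⟨u, rfl⟩ := hh
  set h' : AInf k := ↑u⁻¹ with hh'
  have hinv : (u : AInf k) * h' = 1 := u.mul_inv
  have hxy : xA k * yA k = 0 := aInf_xy_zero k
  set M : Matrix (Fin 4) (Fin 4) (AInf k) :=
    !![yA k, -(zA k ^ p), 0, (u : AInf k);
       0, xA k, 0, 0;
       0, 0, yA k, -(zA k);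
       0, 0, 0, xA k] with hM
  set μ₀ : (Fin 4 → AInf k) →ₗ[AInf k] AInf k :=
    (xA k * zA k) • LinearMap.proj 0 + (zA k ^ (p+1)) • LinearMap.proj 1 +
      ((u : AInf k) * xA k) • LinearMap.proj 2 with hμ₀
  have hμ : ∀ w : Fin 4 → AInf k,
      μ₀ w = xA k * zA k * w 0 + zA k ^ (p+1) * w 1 + (u : AInf k) * xA k * w 2 := by
    intro w
    simp [hμ₀, smul_eq_mul]
  set lam : (Fin 4 → AInf k) →ₗ[AInf k] AInf k :=
    LinearMap.proj 3 - (h' * xA k) • LinearMap.proj 0 -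
      (h' * zA k ^ p) • LinearMap.proj 1 with hlam₀
  have hlam : ∀ w : Fin 4 → AInf k,
      lam w = w 3 - h' * xA k * w 0 - h' * zA k ^ p * w 1 := by
    intro w
    simp [hlam₀, smul_eq_mul]
  have hmem : ∀ w, μ₀ w ∈ IIdeal k (p+1) := by
    intro w
    rw [Ideal.mem_span_pair]
    exact ⟨zA k * w 0 + (u : AInf k) * w 2, w 1, by rw [hμ]; ring⟩
  set Φ : (Fin 4 → AInf k) →ₗ[AInf k] (↥(IIdeal k (p+1)) × AInf k) :=
    LinearMap.prod (LinearMap.codRestrict (Submodule.restrictScalars _ (IIdeal k (p+1))) μ₀ hmem) lam with hΦ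
  have hΦ1 : ∀ w, ((Φ w).1 : AInf k) = μ₀ w := fun w => rfl
  have hΦ2 : ∀ w, (Φ w).2 = lam w := fun w => rfl
  have hMv : ∀ v : Fin 4 → AInf k, Matrix.toLin' M v =
      ![yA k * v 0 - zA k ^ p * v 1 + (u : AInf k) * v 3,
        xA k * v 1, yA k * v 2 - zA k * v 3, xA k * v 3] := by
    intro v
    funext i
    fin_cases i <;>
      simp [hM, Matrix.toLin'_apply, Matrix.mulVec, dotProduct, Fin.sum_univ_four] <;>
      ring
  have hsurj : Function.Surjective Φ := by
    rintro ⟨⟨i, hi⟩, r⟩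
    obtain ⟨a, b, hab⟩ := Ideal.mem_span_pair.mp hi
    refine ⟨![0, b, h' * a, r + h' * zA k ^ p * b], ?_⟩
    refine Prod.ext (Subtype.ext ?_) ?_
    · rw [hΦ1, hμ]
      show xA k * zA k * 0 + zA k ^ (p+1) * b + (u : AInf k) * xA k * (h' * a) = i
      linear_combination hab + (xA k * a) * hinv
    · rw [hΦ2, hlam]
      show (r + h' * zA k ^ p * b) - h' * xA k * 0 - h' * zA k ^ p * b = r
      ring
  have hker : LinearMap.range (Matrix.toLin' M) = LinearMap.ker Φ := by
    apply le_antisymm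
    · rintro _ ⟨v, rfl⟩
      rw [LinearMap.mem_ker]
      refine Prod.ext ?_ ?_
      · refine Subtype.ext ?_
        rw [hΦ1, hμ, hMv]
        simp only [Prod.fst_zero, ZeroMemClass.coe_zero, Matrix.cons_val_zero,
          Matrix.cons_val_one, Matrix.head_cons, Matrix.cons_val_two, Matrix.tail_cons,
          Matrix.cons_val_three, Matrix.head_fin_const]
        show xA k * zA k * (yA k * v 0 - zA k ^ p * v 1 + (u : AInf k) * v 3) +
          zA k ^ (p+1) * (xA k * v 1) + (u : AInf k) * xA k * (yA k * v 2 - zA k * v 3) = (0 : AInf k)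
        linear_combination (zA k * v 0 + (u : AInf k) * v 2) * hxy
      · rw [hΦ2, hlam, hMv]
        simp only [Prod.snd_zero, Matrix.cons_val_zero, Matrix.cons_val_one, Matrix.head_cons,
          Matrix.cons_val_two, Matrix.tail_cons, Matrix.cons_val_three, Matrix.head_fin_const]
        show xA k * v 3 - h' * xA k * (yA k * v 0 - zA k ^ p * v 1 + (u : AInf k) * v 3) -
          h' * zA k ^ p * (xA k * v 1) = 0
        linear_combination (-(h' * v 0)) * hxy - (xA k * v 3) * hinv
    · intro v hv
      rw [LinearMap.mem_ker] at hv
      have h1 : μ₀ v = 0 := by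
        have := congrArg (fun q => ((q.1 : AInf k)) ) hv
        simpa [hΦ1] using this
      have h2 : lam v = 0 := congrArg Prod.snd hv
      rw [hμ] at h1
      rw [hlam] at h2
      have hkey : (zA k * v 0 + (u : AInf k) * v 2) * xA k + v 1 * zA k ^ (p+1) = 0 := by
        linear_combination h1
      obtain ⟨c, d, hcd1, hcd2⟩ := aInf_key k (p+1) _ _ hkey
      refine ⟨![0, -d, h' * c, h' * (v 0 - d * zA k ^ p)], ?_⟩
      rw [hMv]
      funext i
      fin_cases i
      · show yA k * 0 - zA k ^ p * (-d) + (u : AInf k) * (h' * (v 0 - d * zA k ^ p)) = v 0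
        linear_combination (v 0 - d * zA k ^ p) * hinv
      · show xA k * (-d) = v 1
        linear_combination -hcd2
      · show yA k * (h' * c) - zA k * (h' * (v 0 - d * zA k ^ p)) = v 2
        linear_combination (-h') * hcd1 + v 2 * hinv
      · show xA k * (h' * (v 0 - d * zA k ^ p)) = v 3
        linear_combination -h2 - h' * zA k ^ p * hcd2
  exact ⟨(Submodule.quotEquivOfEq _ _ hker).trans (Φ.quotKerEquivOfSurjective hsurj)⟩
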